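/- Let a be an invertible element of a finite dimensional unital complex algebra A, with minimal polynomial p, and let b be an invertible element of a finite dimensional unital complex algebra B, with minimal polynomial q. If λ ∈ ℂ is nonzero and is not the quotient of a root of p by a root of q, then there exists a polynomial r ∈ ℂ[X] with r(a ⊕ λb) = a ⊕ 0 in A ⊕ B. -/

import Mathlib

open Polynomial

-- minpoly of a unit has nonzero constant coefficient
lemma aux_coeff_zero_ne {B : Type*} [Ring B] [Algebra ℂ B] [FiniteDimensional ℂ B]
    {b : B} (hb : IsUnit b) : (minpoly ℂ b).coeff 0 ≠ 0 := by
  intro h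
  have hint : IsIntegral ℂ b := IsIntegral.of_finite ℂ b
  obtain ⟨q1, hq1⟩ := (Polynomial.X_dvd_iff).mpr h
  have hmono : (minpoly ℂ b).Monic := minpoly.monic hint
  have hq1m : q1.Monic := by
    have : (X * q1).Monic := hq1 ▸ hmono
    exact (monic_X.of_mul_monic_left this)
  have haev : b * (aeval b q1) = 0 := by
    have := minpoly.aeval ℂ b
    rw [hq1] at this
    simpa using this
  have hz : aeval b q1 = 0 := by
    obtain ⟨u, rfl⟩ := hb
    have := congrArg (fun x => (↑u⁻¹ : B) * x) haev
    simpa [← mul_assoc] using this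
  have := minpoly.min ℂ b hq1m hz
  have hd : q1.degree < (minpoly ℂ b).degree := by
    rw [hq1, mul_comm]
    exact degree_lt_degree_mul_X hq1m.ne_zero
  exact absurd this (not_le_of_gt hd)

theorem stmt14 (A B : Type*) [Ring A] [Ring B] [Algebra ℂ A] [Algebra ℂ B]
    [FiniteDimensional ℂ A] [FiniteDimensional ℂ B]
    (a : A) (b : B) (ha : IsUnit a) (hb : IsUnit b)
    (lam : ℂ) (hlam : lam ≠ 0)
    (hroot : ∀ μ ν : ℂ, (minpoly ℂ a).IsRoot μ → (minpoly ℂ b).IsRoot ν → lam ≠ μ / ν) :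
    ∃ r : Polynomial ℂ, Polynomial.aeval ((a, lam • b) : A × B) r = (a, 0) := by
  have hia : IsIntegral ℂ a := IsIntegral.of_finite ℂ a
  have hib : IsIntegral ℂ b := IsIntegral.of_finite ℂ b
  set p := minpoly ℂ a with hp
  set q := minpoly ℂ b with hq
  set q' := q.scaleRoots lam with hq'
  -- q' vanishes at lam • b
  have hq'b : aeval (lam • b) q' = 0 := by
    have : aeval (algebraMap ℂ B lam * b) (q.scaleRoots lam) = 0 :=
      scaleRoots_aeval_eq_zero (minpoly.aeval ℂ b)
    rwa [← Algebra.smul_def] at this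
  -- coprimality
  have hcop : IsCoprime p q' := by
    rw [Polynomial.isCoprime_iff_aeval_ne_zero_of_isAlgClosed (k := ℂ) ℂ]
    intro z
    by_contra hcon
    push_neg at hcon
    obtain ⟨hz1, hz2⟩ := hcon
    have hrootp : p.IsRoot z := by simpa [Polynomial.aeval_def] using hz1
    -- z/lam is a root of q
    have hzq : q.IsRoot (z / lam) := by
      have h1 : Polynomial.eval₂ (RingHom.id ℂ) ((RingHom.id ℂ) lam * (z / lam)) q'
          = (RingHom.id ℂ) lam ^ q.natDegree * Polynomial.eval₂ (RingHom.id ℂ) (z / lam) q :=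
        Polynomial.scaleRoots_eval₂_mul (RingHom.id ℂ) (z / lam) lam
      simp only [RingHom.id_apply, mul_div_cancel₀ _ hlam] at h1
      have hz2' : Polynomial.eval₂ (RingHom.id ℂ) z q' = 0 := by
        simpa [Polynomial.aeval_def, Polynomial.eval₂_eq_eval_map] using hz2
      rw [hz2'] at h1
      have := (mul_eq_zero.mp h1.symm).resolve_left (pow_ne_zero _ hlam)
      simpa [Polynomial.IsRoot, Polynomial.eval₂_eq_eval_map] using this
    have hnu : z / lam ≠ 0 := by
      intro h0
      rw [h0] at hzq
      exact aux_coeff_zero_ne hb (by simpa [Polynomial.coeff_zero_eq_eval_zero] using hzq)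
    have hzne : z ≠ 0 := fun h0 => hnu (by simp [h0])
    exact hroot z (z / lam) hrootp hzq (by field_simp)
  -- Bezout
  obtain ⟨u, v, huv⟩ := hcop
  refine ⟨X * (v * q'), ?_⟩
  have hvq : v * q' = 1 - u * p := by linear_combination huv
  have hfst := Polynomial.aeval_algHom_apply (AlgHom.fst ℂ A B) ((a, lam • b) : A × B) (X * (v * q'))
  have hsnd := Polynomial.aeval_algHom_apply (AlgHom.snd ℂ A B) ((a, lam • b) : A × B) (X * (v * q'))
  simp only [AlgHom.fst_apply, AlgHom.snd_apply] at hfst hsnd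
  ext
  · show (aeval ((a, lam • b) : A × B) (X * (v * q'))).1 = a
    rw [← hfst, map_mul, hvq]
    have hpa : aeval a p = 0 := minpoly.aeval ℂ a
    simp [hpa]
  · show (aeval ((a, lam • b) : A × B) (X * (v * q'))).2 = 0
    rw [← hsnd, map_mul, map_mul, hq'b]
    simp
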